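/- The vector v = (1/√2)·(−i/√(n−k) repeated in the first n−k coordinates, 1/√k repeated in the last k coordinates) is a unit eigenvector of the block matrix U_k = S_k D (S_k negating the last k coordinates, D the Grover operator) with eigenvalue λ = 1 - 2k/n + (2i/n)√(k(n-k)). -/

import Mathlib

lemma sum_if_aux {R : Type*} [NonAssocSemiring R] (n k : ℕ) (hk0 : 0 < k) (hk1 : k < n) (a b : R) :
    ∑ j : Fin n, (if (j : ℕ) < n - k then a else b) = ((n - k : ℕ) : R) * a + (k : R) * b := by
  rw [Finset.sum_ite, Finset.sum_const, Finset.sum_const]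
  have hcard : (Finset.univ.filter fun j : Fin n => (j : ℕ) < n - k).card = n - k := by
    have : (Finset.univ.filter fun j : Fin n => (j : ℕ) < n - k)
        = Finset.Iio ⟨n - k, by omega⟩ := by
      ext j; simp [Fin.lt_def]
    rw [this, Fin.card_Iio]
  have hcard2 : (Finset.univ.filter fun j : Fin n => ¬ (j : ℕ) < n - k).card = k := by
    have h := Finset.card_filter_add_card_filter_not
      (s := (Finset.univ : Finset (Fin n))) (p := fun j : Fin n => (j : ℕ) < n - k)
    simp only [Finset.card_univ, Fintype.card_fin, hcard] at h ⊢
    omega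
  rw [hcard, hcard2, nsmul_eq_mul, nsmul_eq_mul]

lemma key1 (x y : ℂ) (hx : x ≠ 0) (hy : y ≠ 0) (hn : x^2 + y^2 ≠ 0) :
    (2/(x^2+y^2)) * (x^2 * (-Complex.I/x) + y^2 * (1/y)) - (-Complex.I/x)
      = (1 - 2*y^2/(x^2+y^2) + 2*Complex.I/(x^2+y^2) * (y*x)) * (-Complex.I/x) := by
  field_simp
  linear_combination (2*x*y) * Complex.I_sq

lemma key2 (x y : ℂ) (hx : x ≠ 0) (hy : y ≠ 0) (hn : x^2 + y^2 ≠ 0) :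
    -((2/(x^2+y^2)) * (x^2 * (-Complex.I/x) + y^2 * (1/y)) - (1/y))
      = (1 - 2*y^2/(x^2+y^2) + 2*Complex.I/(x^2+y^2) * (y*x)) * (1/y) := by
  field_simp
  ring

/-- The vector `v` with value `-i/√(2(n-k))` on the first `n-k` coordinates and
`1/√(2k)` on the last `k` coordinates is a unit eigenvector of `U = S_k * D`
(with `S_k` negating the last `k` coordinates and `D` the Grover operator) with
eigenvalue `λ = 1 - 2k/n + (2i/n)√(k(n-k))`. -/
theorem nontrivial_eigenvector (n k : ℕ) (hn : 2 ≤ n) (hk0 : 0 < k) (hk1 : k < n)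
    (D S : Matrix (Fin n) (Fin n) ℂ)
    (hD : ∀ i j, D i j = 2 / n - if i = j then 1 else 0)
    (hS : S = Matrix.diagonal fun i : Fin n => if (i : ℕ) < n - k then (1 : ℂ) else -1)
    (v : Fin n → ℂ)
    (hv : ∀ i, v i = (1 / Real.sqrt 2 : ℝ) *
      (if (i : ℕ) < n - k then -Complex.I / (Real.sqrt (n - k) : ℝ)
        else 1 / (Real.sqrt k : ℝ))) :
    (S * D).mulVec v =
        (1 - 2 * (k : ℂ) / n + (2 * Complex.I / n) * (Real.sqrt (k * (n - k)) : ℝ)) • v ∧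
      ∑ i, ‖v i‖ ^ 2 = 1 := by
  set x : ℝ := Real.sqrt ((n : ℝ) - k) with hxdef
  set y : ℝ := Real.sqrt (k : ℝ) with hydef
  have hnk : (0 : ℝ) < (n : ℝ) - k := by
    have : (k : ℝ) < n := by exact_mod_cast hk1
    linarith
  have hx0 : 0 < x := Real.sqrt_pos.2 hnk
  have hy0 : 0 < y := Real.sqrt_pos.2 (by exact_mod_cast hk0)
  have hx2 : x ^ 2 = (n : ℝ) - k := Real.sq_sqrt hnk.le
  have hy2 : y ^ 2 = (k : ℝ) := Real.sq_sqrt (by positivity)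
  have hxC : ((x : ℂ)) ^ 2 = (n : ℂ) - k := by
    have := congrArg (Complex.ofReal) hx2
    push_cast at this ⊢
    exact this
  have hyC : ((y : ℂ)) ^ 2 = (k : ℂ) := by
    have := congrArg (Complex.ofReal) hy2
    push_cast at this ⊢
    exact this
  have hnC : (n : ℂ) = (x : ℂ) ^ 2 + (y : ℂ) ^ 2 := by rw [hxC, hyC]; ring
  have hxne : (x : ℂ) ≠ 0 := by exact_mod_cast hx0.ne'
  have hyne : (y : ℂ) ≠ 0 := by exact_mod_cast hy0.ne'
  have hnne : (x : ℂ) ^ 2 + (y : ℂ) ^ 2 ≠ 0 := by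
    rw [← hnC]
    exact_mod_cast (by omega : n ≠ 0)
  have hmk : ((n - k : ℕ) : ℂ) = (x : ℂ) ^ 2 := by
    rw [hxC]; push_cast [Nat.cast_sub hk1.le]; ring
  have hkC : (k : ℂ) = (y : ℂ) ^ 2 := hyC.symm
  have hsqrtkm : Real.sqrt ((k : ℝ) * ((n : ℝ) - k)) = y * x := by
    rw [Real.sqrt_mul (by positivity)]
  -- the sum of entries of v
  set c1 : ℂ := ((1 / Real.sqrt 2 : ℝ) : ℂ) * (-Complex.I / (x : ℂ)) with hc1
  set c2 : ℂ := ((1 / Real.sqrt 2 : ℝ) : ℂ) * (1 / (y : ℂ)) with hc2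
  have hvite : ∀ j : Fin n, v j = if (j : ℕ) < n - k then c1 else c2 := by
    intro j
    rw [hv j, mul_ite]
  have hT : ∑ j, v j = ((n - k : ℕ) : ℂ) * c1 + (k : ℂ) * c2 := by
    simp_rw [hvite]
    exact sum_if_aux n k hk0 hk1 c1 c2
  constructor
  · rw [← Matrix.mulVec_mulVec, hS]
    funext i
    rw [Matrix.mulVec_diagonal]
    have hDv : D.mulVec v i = 2 / (n : ℂ) * (∑ j, v j) - v i := by
      simp only [Matrix.mulVec, dotProduct, hD, sub_mul, ite_mul, one_mul, zero_mul,
        Finset.sum_sub_distrib, ← Finset.mul_sum, Finset.sum_ite_eq, Finset.mem_univ, if_pos]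
    rw [hDv, hT, Pi.smul_apply, smul_eq_mul, hvite i, hmk, hkC, hnC, hsqrtkm]
    push_cast
    by_cases h : (i : ℕ) < n - k
    · rw [if_pos h, if_pos h, hc1]
      have := key1 (x : ℂ) (y : ℂ) hxne hyne hnne
      set s : ℂ := ((1 / Real.sqrt 2 : ℝ) : ℂ)
      linear_combination s * this
    · rw [if_neg h, if_neg h, hc2]
      have := key2 (x : ℂ) (y : ℂ) hxne hyne hnne
      set s : ℂ := ((1 / Real.sqrt 2 : ℝ) : ℂ)
      linear_combination s * this
  · have h2 : Real.sqrt 2 ^ 2 = 2 := Real.sq_sqrt (by norm_num)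
    have habs : ∀ i : Fin n, ‖v i‖ ^ 2
        = if (i : ℕ) < n - k then (1 / (2 * ((n : ℝ) - k))) else (1 / (2 * (k : ℝ))) := by
      intro i
      rw [hvite i]
      split_ifs with h
      · rw [hc1]
        simp only [norm_mul, norm_div, Complex.norm_real, Real.norm_eq_abs, norm_neg, Complex.norm_I,
          abs_of_nonneg (Real.sqrt_nonneg ((n:ℝ) - k)),
          abs_of_nonneg (by positivity : (0:ℝ) ≤ 1 / Real.sqrt 2)]
        rw [← hx2, ← h2]
        field_simp
        rw [h2, abs_one, abs_of_pos hx0, abs_of_nonneg (Real.sqrt_nonneg _), h2]; ring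
      · rw [hc2]
        simp only [norm_mul, norm_div, Complex.norm_real, Real.norm_eq_abs, norm_one,
          abs_of_nonneg (Real.sqrt_nonneg (k:ℝ)),
          abs_of_nonneg (by positivity : (0:ℝ) ≤ 1 / Real.sqrt 2)]
        rw [← hy2, ← h2]
        field_simp
        rw [h2, abs_of_pos hy0, abs_of_nonneg (Real.sqrt_nonneg _), h2]
    have hk0' : (k : ℝ) ≠ 0 := by exact_mod_cast hk0.ne'
    calc ∑ i, ‖v i‖ ^ 2
        = ((n - k : ℕ) : ℝ) * (1 / (2 * ((n : ℝ) - k))) + (k : ℝ) * (1 / (2 * (k : ℝ))) := by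
          simp_rw [habs]; exact sum_if_aux n k hk0 hk1 _ _
      _ = 1 := by
          rw [Nat.cast_sub hk1.le]
          field_simp
          ring
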